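/- Let p be a polynomial in the space P₂ ⊕ span{x₁x₂x₃, x₁(x₂²+x₃²), x₂(x₁²+x₃²), x₃(x₁²+x₂²)} (the new 14-node element). If p vanishes at the four points (1,±1,±1) and at (1,0,0), then the integral of p(1,x₂,x₃) over [−1,1]² equals zero. -/

import Mathlib

open MvPolynomial

noncomputable def NewSpace : Submodule ℝ (MvPolynomial (Fin 3) ℝ) :=
  MvPolynomial.restrictTotalDegree (Fin 3) ℝ 2 ⊔
    Submodule.span ℝ {X 0 * X 1 * X 2, X 0 * (X 1 ^ 2 + X 2 ^ 2),
      X 1 * (X 0 ^ 2 + X 2 ^ 2), X 2 * (X 0 ^ 2 + X 1 ^ 2)}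

lemma contEval (p : MvPolynomial (Fin 3) ℝ) :
    Continuous fun v : ℝ × ℝ => eval ![1, v.1, v.2] p := by
  apply (MvPolynomial.continuous_eval p).comp
  refine continuous_pi fun i => ?_
  fin_cases i <;> simp <;> fun_prop

lemma contInner (p : MvPolynomial (Fin 3) ℝ) (y : ℝ) :
    Continuous fun z : ℝ => eval ![1, y, z] p := by
  simpa [Function.comp_def] using (contEval p).comp
    (Continuous.prodMk_right y : Continuous fun z : ℝ => (y, z))

lemma contOuter (p : MvPolynomial (Fin 3) ℝ) :
    Continuous fun y : ℝ => ∫ z in (-1:ℝ)..1, eval ![1, y, z] p :=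
  intervalIntegral.continuous_parametric_intervalIntegral_of_continuous'
    (f := fun y z => eval ![1, y, z] p) (contEval p) (-1) 1

noncomputable def Imap : MvPolynomial (Fin 3) ℝ →ₗ[ℝ] ℝ where
  toFun p := ∫ y in (-1:ℝ)..1, ∫ z in (-1:ℝ)..1, eval ![1, y, z] p
  map_add' p q := by
    have h : ∀ y : ℝ, (∫ z in (-1:ℝ)..1, eval ![1, y, z] (p + q))
        = (∫ z in (-1:ℝ)..1, eval ![1, y, z] p)
          + ∫ z in (-1:ℝ)..1, eval ![1, y, z] q := by
      intro y
      simp only [map_add]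
      exact intervalIntegral.integral_add ((contInner p y).intervalIntegrable _ _)
        ((contInner q y).intervalIntegrable _ _)
    simp only [h]
    exact intervalIntegral.integral_add ((contOuter p).intervalIntegrable _ _)
      ((contOuter q).intervalIntegrable _ _)
  map_smul' c p := by
    simp only [MvPolynomial.smul_eval, intervalIntegral.integral_const_mul,
      RingHom.id_apply, smul_eq_mul]

noncomputable def Smap : MvPolynomial (Fin 3) ℝ →ₗ[ℝ] ℝ where
  toFun p := (1/3) * (eval ![1,1,1] p + eval ![1,1,-1] p + eval ![1,-1,1] p
      + eval ![1,-1,-1] p) + (8/3) * eval ![1,0,0] p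
  map_add' p q := by simp only [map_add]; ring
  map_smul' c p := by
    simp only [MvPolynomial.smul_eval, RingHom.id_apply, smul_eq_mul]; ring

lemma II (a b : ℕ) (c : ℝ) :
    (∫ y in (-1:ℝ)..1, ∫ z in (-1:ℝ)..1, c * y ^ a * z ^ b)
      = c * ((1 - (-1:ℝ) ^ (a+1)) / (a+1)) * ((1 - (-1:ℝ) ^ (b+1)) / (b+1)) := by
  have h1 : ∀ y : ℝ, (∫ z in (-1:ℝ)..1, c * y ^ a * z ^ b)
      = (c * ((1 - (-1:ℝ) ^ (b+1)) / (b+1))) * y ^ a := by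
    intro y
    rw [intervalIntegral.integral_const_mul, integral_pow]
    push_cast
    ring
  simp_rw [h1, intervalIntegral.integral_const_mul, integral_pow]
  push_cast
  ring

lemma Dmono (m : Fin 3 →₀ ℕ) (c : ℝ) (hm : m.sum (fun _ n => n) ≤ 2) :
    Imap (monomial m c) = Smap (monomial m c) := by
  have hdeg : m 1 + m 2 ≤ 2 := by
    rw [Finsupp.sum_fintype _ _ (fun _ => rfl), Fin.sum_univ_three] at hm
    omega
  have hev : ∀ y z : ℝ, eval ![1, y, z] (monomial m c) = c * y ^ (m 1) * z ^ (m 2) := by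
    intro y z
    rw [eval_monomial, Finsupp.prod_pow, Fin.prod_univ_three]
    simp [mul_assoc]
  simp only [Imap, Smap, LinearMap.coe_mk, AddHom.coe_mk, hev]
  rw [II]
  revert hdeg
  generalize m 1 = a
  generalize m 2 = b
  intro hdeg
  have ha : a ≤ 2 := by omega
  have hb : b ≤ 2 := by omega
  interval_cases a <;> interval_cases b <;> first
    | omega
    | (norm_num; try ring)

lemma key : NewSpace ≤ LinearMap.ker (Imap - Smap) := by
  rw [NewSpace]
  apply sup_le
  · intro q hq
    rw [MvPolynomial.mem_restrictTotalDegree] at hq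
    rw [LinearMap.mem_ker, LinearMap.sub_apply, sub_eq_zero]
    conv_lhs => rw [← q.support_sum_monomial_coeff]
    conv_rhs => rw [← q.support_sum_monomial_coeff]
    rw [map_sum, map_sum]
    refine Finset.sum_congr rfl fun v hv => ?_
    exact Dmono v (coeff v q) (le_trans (MvPolynomial.le_totalDegree hv) hq)
  · rw [Submodule.span_le]
    intro g hg
    simp only [Set.mem_insert_iff, Set.mem_singleton_iff] at hg
    rw [SetLike.mem_coe, LinearMap.mem_ker, LinearMap.sub_apply, sub_eq_zero]
    have e0 : ∀ y z : ℝ, eval ![1, y, z] (X 0 * X 1 * X 2 : MvPolynomial (Fin 3) ℝ)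
        = 1 * y ^ 1 * z ^ 1 := by intro y z; simp only [eval_mul, eval_add, eval_pow, eval_X, Matrix.cons_val_zero, Matrix.cons_val_one, Matrix.head_cons, Matrix.cons_val_two, Matrix.tail_cons]; ring
    have e1 : ∀ y z : ℝ,
        eval ![1, y, z] (X 0 * (X 1 ^ 2 + X 2 ^ 2) : MvPolynomial (Fin 3) ℝ)
        = 1 * y ^ 2 * z ^ 0 + 1 * y ^ 0 * z ^ 2 := by intro y z; simp only [eval_mul, eval_add, eval_pow, eval_X, Matrix.cons_val_zero, Matrix.cons_val_one, Matrix.head_cons, Matrix.cons_val_two, Matrix.tail_cons]; ring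
    have e2 : ∀ y z : ℝ,
        eval ![1, y, z] (X 1 * (X 0 ^ 2 + X 2 ^ 2) : MvPolynomial (Fin 3) ℝ)
        = 1 * y ^ 1 * z ^ 0 + 1 * y ^ 1 * z ^ 2 := by intro y z; simp only [eval_mul, eval_add, eval_pow, eval_X, Matrix.cons_val_zero, Matrix.cons_val_one, Matrix.head_cons, Matrix.cons_val_two, Matrix.tail_cons]; ring
    have e3 : ∀ y z : ℝ,
        eval ![1, y, z] (X 2 * (X 0 ^ 2 + X 1 ^ 2) : MvPolynomial (Fin 3) ℝ)
        = 1 * y ^ 0 * z ^ 1 + 1 * y ^ 2 * z ^ 1 := by intro y z; simp only [eval_mul, eval_add, eval_pow, eval_X, Matrix.cons_val_zero, Matrix.cons_val_one, Matrix.head_cons, Matrix.cons_val_two, Matrix.tail_cons]; ring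
    have II2 : ∀ a b a' b' : ℕ,
        (∫ y in (-1:ℝ)..1, ∫ z in (-1:ℝ)..1, ((1:ℝ) * y ^ a * z ^ b + 1 * y ^ a' * z ^ b'))
        = ((1 - (-1:ℝ) ^ (a+1)) / (a+1)) * ((1 - (-1:ℝ) ^ (b+1)) / (b+1))
          + ((1 - (-1:ℝ) ^ (a'+1)) / (a'+1)) * ((1 - (-1:ℝ) ^ (b'+1)) / (b'+1)) := by
      intro a b a' b'
      have hin : ∀ y : ℝ, (∫ z in (-1:ℝ)..1, ((1:ℝ) * y ^ a * z ^ b + 1 * y ^ a' * z ^ b'))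
          = (∫ z in (-1:ℝ)..1, (1:ℝ) * y ^ a * z ^ b)
            + ∫ z in (-1:ℝ)..1, (1:ℝ) * y ^ a' * z ^ b' := by
        intro y
        exact intervalIntegral.integral_add
          ((by fun_prop : Continuous fun z : ℝ => (1:ℝ) * y ^ a * z ^ b).intervalIntegrable _ _)
          ((by fun_prop : Continuous fun z : ℝ => (1:ℝ) * y ^ a' * z ^ b').intervalIntegrable _ _)
      simp_rw [hin]
      rw [intervalIntegral.integral_add]
      · rw [II, II]; ring
      · apply Continuous.intervalIntegrable
        have : ∀ y : ℝ, (∫ z in (-1:ℝ)..1, (1:ℝ) * y ^ a * z ^ b)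
            = ((1:ℝ) * ((1 - (-1:ℝ) ^ (b+1)) / (b+1))) * y ^ a := by
          intro y
          rw [intervalIntegral.integral_const_mul, integral_pow]
          push_cast; ring
        simp_rw [this]; fun_prop
      · apply Continuous.intervalIntegrable
        have : ∀ y : ℝ, (∫ z in (-1:ℝ)..1, (1:ℝ) * y ^ a' * z ^ b')
            = ((1:ℝ) * ((1 - (-1:ℝ) ^ (b'+1)) / (b'+1))) * y ^ a' := by
          intro y
          rw [intervalIntegral.integral_const_mul, integral_pow]
          push_cast; ring
        simp_rw [this]; fun_prop
    rcases hg with rfl | rfl | rfl | rfl <;>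
      simp only [Imap, Smap, LinearMap.coe_mk, AddHom.coe_mk, e0, e1, e2, e3] <;>
      first
      | (rw [II]; norm_num)
      | (rw [II2]; norm_num)

theorem stmt16 (p : MvPolynomial (Fin 3) ℝ) (hp : p ∈ NewSpace)
    (h1 : eval ![1, 1, 1] p = 0) (h2 : eval ![1, 1, -1] p = 0)
    (h3 : eval ![1, -1, 1] p = 0) (h4 : eval ![1, -1, -1] p = 0)
    (h5 : eval ![1, 0, 0] p = 0) :
    (∫ y in (-1 : ℝ)..1, ∫ z in (-1 : ℝ)..1, eval ![1, y, z] p) = 0 := by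
  have hk := key hp
  rw [LinearMap.mem_ker, LinearMap.sub_apply, sub_eq_zero] at hk
  have : Imap p = (∫ y in (-1 : ℝ)..1, ∫ z in (-1 : ℝ)..1, eval ![1, y, z] p) := rfl
  rw [← this, hk]
  simp only [Smap, LinearMap.coe_mk, AddHom.coe_mk, h1, h2, h3, h4, h5]
  ring
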